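/- Let n ≥ 2, let j ≠ ℓ be two indices in Fin n, let k be a positive integer, and let m_i ≥ 2 be integers for all i ≠ j. If x : Fin n → ℂ satisfies (i) (m_i)·(x i)^(m_i − 1) = 0 for every i ∉ {j, ℓ}, (ii) (m_ℓ)·(x ℓ)^(m_ℓ − 1) + (x j)^k = 0, and (iii) k·(x j)^(k−1)·(x ℓ) = 0, then x = 0. In particular, the polynomial F = Σ_{i ≠ j} x_i^{m_i} + x_j^k·x_ℓ has the property that the only common zero of all its partial derivatives is the origin, i.e. the hypersurface F = 0 is quasi-smooth. -/
import Mathlib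

/-- Quasi-smoothness of the hypersurface `F = Σ_{i ≠ j} x_i^{m_i} + x_j^k·x_ℓ`:
if all the partial derivatives of `F` vanish at `x : Fin n → ℂ`, then `x = 0`. -/
theorem stmt_19 (n : ℕ) (hn : 2 ≤ n) (j ℓ : Fin n) (hjl : j ≠ ℓ)
    (k : ℕ) (hk : 0 < k) (m : Fin n → ℕ) (hm : ∀ i, i ≠ j → 2 ≤ m i)
    (x : Fin n → ℂ)
    (h1 : ∀ i, i ≠ j → i ≠ ℓ → (m i : ℂ) * (x i) ^ (m i - 1) = 0)
    (h2 : (m ℓ : ℂ) * (x ℓ) ^ (m ℓ - 1) + (x j) ^ k = 0)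
    (h3 : (k : ℂ) * (x j) ^ (k - 1) * (x ℓ) = 0) :
    x = 0 := by
  have hml : 2 ≤ m ℓ := hm ℓ (Ne.symm hjl)
  have hmlne : (m ℓ : ℂ) ≠ 0 := Nat.cast_ne_zero.2 (by omega)
  have hkne : (k : ℂ) ≠ 0 := Nat.cast_ne_zero.2 (by omega)
  have hjl0 : x j = 0 ∧ x ℓ = 0 := by
    rcases mul_eq_zero.1 h3 with h | hl
    · rcases mul_eq_zero.1 h with h | h
      · exact absurd h hkne
      · have hxj : x j = 0 := by
          rcases Nat.lt_or_ge k 2 with hk2 | hk2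
          · interval_cases k <;> simp_all
          · exact pow_eq_zero_iff (by omega) |>.1 h
        have : (x ℓ) ^ (m ℓ - 1) = 0 := by
          have := h2
          rw [hxj, zero_pow (by omega), add_zero] at this
          exact (mul_eq_zero.1 this).resolve_left hmlne
        exact ⟨hxj, pow_eq_zero_iff (by omega) |>.1 this⟩
    · have : (x j) ^ k = 0 := by
        have := h2
        rw [hl, zero_pow (by omega), mul_zero, zero_add] at this
        exact this
      exact ⟨pow_eq_zero_iff (by omega) |>.1 this, hl⟩
  funext i
  by_cases hij : i = j
  · simpa [hij] using hjl0.1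
  by_cases hil : i = ℓ
  · simpa [hil] using hjl0.2
  · have := h1 i hij hil
    have hmi : (m i : ℂ) ≠ 0 := Nat.cast_ne_zero.2 (by have := hm i hij; omega)
    have : (x i) ^ (m i - 1) = 0 := (mul_eq_zero.1 this).resolve_left hmi
    simpa using pow_eq_zero_iff (by have := hm i hij; omega) |>.1 this
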